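/- Let n ≥ 3 and κ be a real number with (2/n)√(n-1) ≤ κ ≤ 1. Define p = (n/2)κ - √(n²κ²/4 - (n-1)). Then p ≥ (1/κ)(1 + (1-κ²)/(n-2)) ≥ 1/κ. -/
import Mathlib
set_option maxHeartbeats 1000000 in


theorem p_lower_bounds (n : ℕ) (hn : 3 ≤ n) (κ : ℝ)
    (hκl : 2 / (n : ℝ) * Real.sqrt ((n : ℝ) - 1) ≤ κ) (hκu : κ ≤ 1) :
    let p : ℝ := (n : ℝ) / 2 * κ - Real.sqrt ((n : ℝ) ^ 2 * κ ^ 2 / 4 - ((n : ℝ) - 1))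
    (1 / κ) * (1 + (1 - κ ^ 2) / ((n : ℝ) - 2)) ≤ p ∧
      1 / κ ≤ (1 / κ) * (1 + (1 - κ ^ 2) / ((n : ℝ) - 2)) := by
  intro p
  have hN : (3 : ℝ) ≤ (n : ℝ) := by exact_mod_cast hn
  have hN1 : (0 : ℝ) ≤ (n : ℝ) - 1 := by linarith
  have hN2 : (0 : ℝ) < (n : ℝ) - 2 := by linarith
  have hsn : Real.sqrt ((n : ℝ) - 1) > 0 := Real.sqrt_pos.mpr (by linarith)
  have hκ0 : 0 < κ := lt_of_lt_of_le (by positivity) hκl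
  have hs := Real.sq_sqrt hN1
  have ha0 : (0 : ℝ) ≤ 2 / (n : ℝ) * Real.sqrt ((n : ℝ) - 1) := by positivity
  have h4 : 4 * ((n : ℝ) - 1) ≤ (n : ℝ) ^ 2 * κ ^ 2 := by
    have hmul := mul_self_le_mul_self ha0 hκl
    have hnpos : (0 : ℝ) < (n : ℝ) := by linarith
    have : (2 / (n : ℝ) * Real.sqrt ((n : ℝ) - 1)) * (2 / (n : ℝ) * Real.sqrt ((n : ℝ) - 1))
        = 4 * ((n : ℝ) - 1) / (n : ℝ) ^ 2 := by
      field_simp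
      nlinarith [hs]
    rw [this] at hmul
    rw [div_le_iff₀ (by positivity)] at hmul
    nlinarith [hmul]
  set q : ℝ := (1 / κ) * (1 + (1 - κ ^ 2) / ((n : ℝ) - 2)) with hqdef
  have hqm : q * (κ * ((n : ℝ) - 2)) = (n : ℝ) - 1 - κ ^ 2 := by
    rw [hqdef]; field_simp; ring
  have hκN2 : 0 < κ * ((n : ℝ) - 2) := mul_pos hκ0 hN2
  -- q ≤ Nκ/2
  have hq2 : q ≤ (n : ℝ) / 2 * κ := by
    nlinarith [hqm, h4, hκN2, sq_nonneg ((n : ℝ) - 2), mul_pos hκ0 hκ0]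
  -- (q² − Nκq + (N−1)) ≥ 0
  have hkey : 0 ≤ q ^ 2 - (n : ℝ) * κ * q + ((n : ℝ) - 1) := by
    have h1 : (q ^ 2 - (n : ℝ) * κ * q + ((n : ℝ) - 1)) * (κ * ((n : ℝ) - 2)) ^ 2
        = (((n : ℝ) - 1) * (1 - κ ^ 2)) ^ 2 := by
      linear_combination (q * (κ * ((n : ℝ) - 2)) + ((n : ℝ) - 1 - κ ^ 2)
        - (n : ℝ) * κ * (κ * ((n : ℝ) - 2))) * hqm
    nlinarith [h1, sq_nonneg (((n : ℝ) - 1) * (1 - κ ^ 2)), mul_pos hκN2 hκN2]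
  have hle : (n : ℝ) ^ 2 * κ ^ 2 / 4 - ((n : ℝ) - 1) ≤ ((n : ℝ) / 2 * κ - q) ^ 2 := by
    nlinarith [hkey]
  have hsqrt : Real.sqrt ((n : ℝ) ^ 2 * κ ^ 2 / 4 - ((n : ℝ) - 1)) ≤ (n : ℝ) / 2 * κ - q := by
    calc Real.sqrt ((n : ℝ) ^ 2 * κ ^ 2 / 4 - ((n : ℝ) - 1))
        ≤ Real.sqrt (((n : ℝ) / 2 * κ - q) ^ 2) := Real.sqrt_le_sqrt hle
      _ = (n : ℝ) / 2 * κ - q := Real.sqrt_sq (by linarith)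
  constructor
  · show q ≤ (n : ℝ) / 2 * κ - Real.sqrt ((n : ℝ) ^ 2 * κ ^ 2 / 4 - ((n : ℝ) - 1))
    linarith
  · clear_value p
    clear hsqrt hle hkey hq2 hqm h4 hs
    have hκ2 : κ ^ 2 ≤ 1 := by nlinarith [hκ0.le, hκu]
    have ht : 0 ≤ (1 - κ ^ 2) / ((n : ℝ) - 2) := div_nonneg (by linarith) hN2.le
    rw [hqdef]
    nlinarith [mul_nonneg (by positivity : (0:ℝ) ≤ 1 / κ) ht]
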